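/- Let P₁,…,P_k ∈ {0,1}^{r×n} be a patch structure, α ∈ [0,1], f_w(x) = (1/k)·Σ_{i=1}^k σ_α(wᵀPᵢx), P = Σ_{i,j=1}^k PᵢPⱼᵀ, and let μ be a probability measure on ℝⁿ symmetric about the origin with E_μ[‖x‖⁴] < ∞; set Σ = E_μ[xxᵀ] and P_Σ = Σ_{i,j=1}^k PᵢΣPⱼᵀ. Fix w, w* ∈ ℝ^r and η > 0, and define the realizable Convotron update w' = w + η·(f_{w*}(x) − f_w(x))·Σ_{i=1}^k Pᵢx. Then E_{x∼μ}[‖w' − w*‖²] ≤ (1 − η·((1+α)/k)·λ_min(P_Σ) + η²·λ_max(P)·E_μ[‖x‖⁴])·‖w − w*‖². -/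

import Mathlib

open MeasureTheory Matrix Finset
open scoped RealInnerProductSpace

noncomputable section

/-- Leaky ReLU activation with parameter `α`. -/
def lrelu (α z : ℝ) : ℝ := if 0 ≤ z then z else α * z

/-- A patch structure: each `P i` is a 0/1 matrix with exactly one 1 in each row
and at most one 1 in each column. -/
def IsPatchStruct {r n k : ℕ} (P : Fin k → Matrix (Fin r) (Fin n) ℝ) : Prop :=
  (∀ i a b, P i a b = 0 ∨ P i a b = 1) ∧
  (∀ i a, ∃! b, P i a b = 1) ∧
  (∀ i b a a', P i a b = 1 → P i a' b = 1 → a = a')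

/-- View a plain vector as an element of Euclidean space. -/
def toEuc {m : ℕ} (v : Fin m → ℝ) : EuclideanSpace ℝ (Fin m) := WithLp.toLp 2 v

/-- The one-hidden-layer convolutional network
`f_w(x) = (1/k) ∑ i, σ_α (wᵀ Pᵢ x)` with average pooling. -/
def convnet {r n k : ℕ} (α : ℝ) (P : Fin k → Matrix (Fin r) (Fin n) ℝ)
    (w : EuclideanSpace ℝ (Fin r)) (x : EuclideanSpace ℝ (Fin n)) : ℝ :=
  (1 / (k : ℝ)) * ∑ i, lrelu α ((w : Fin r → ℝ) ⬝ᵥ (P i).mulVec x)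

/-- The (uncentered) covariance matrix `Σ = E_{x∼μ}[x xᵀ]`. -/
def covMat {n : ℕ} (μ : Measure (EuclideanSpace ℝ (Fin n))) : Matrix (Fin n) (Fin n) ℝ :=
  Matrix.of fun i j => ∫ x, x i * x j ∂μ

/-- Maximum eigenvalue of a Hermitian (real symmetric) matrix. -/
def lamMax {m : ℕ} (A : Matrix (Fin m) (Fin m) ℝ) (hA : A.IsHermitian) : ℝ :=
  ⨆ i, hA.eigenvalues i

/-- Minimum eigenvalue of a Hermitian (real symmetric) matrix. -/
def lamMin {m : ℕ} (A : Matrix (Fin m) (Fin m) ℝ) (hA : A.IsHermitian) : ℝ :=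
  ⨅ i, hA.eigenvalues i

/-! ### Auxiliary lemmas -/

lemma aux_le_of_sq_le_sq {a b : ℝ} (hb : 0 ≤ b) (h : a ^ 2 ≤ b ^ 2) (ha : 0 ≤ a) : a ≤ b := by
  nlinarith

lemma quadform_eigen {m : ℕ} (A : Matrix (Fin m) (Fin m) ℝ) (hA : A.IsHermitian) (v : Fin m → ℝ) :
    ∃ u : Fin m → ℝ, (∑ i, u i ^ 2 = ∑ i, v i ^ 2) ∧
      v ⬝ᵥ A *ᵥ v = ∑ i, hA.eigenvalues i * u i ^ 2 := by
  classical
  set U : Matrix (Fin m) (Fin m) ℝ := (hA.eigenvectorUnitary : Matrix (Fin m) (Fin m) ℝ) with hU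
  have hUU : U * star U = 1 := (Matrix.mem_unitaryGroup_iff).mp hA.eigenvectorUnitary.2
  have hstar : star U = Uᵀ := by
    ext i j; simp [Matrix.star_eq_conjTranspose, Matrix.conjTranspose_apply]
  have h1 : Uᵀ *ᵥ v = v ᵥ* U := mulVec_transpose U v
  refine ⟨Uᵀ *ᵥ v, ?_, ?_⟩
  · have : (Uᵀ *ᵥ v) ⬝ᵥ (Uᵀ *ᵥ v) = v ⬝ᵥ v := by
      nth_rewrite 1 [h1]
      rw [← dotProduct_mulVec, mulVec_mulVec, ← hstar, hUU, one_mulVec]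
    simpa [dotProduct, pow_two] using this
  · conv_lhs => rw [hA.spectral_theorem, Unitary.conjStarAlgAut_apply, ← hU]
    rw [hstar, ← mulVec_mulVec, ← mulVec_mulVec, dotProduct_mulVec (v := v), ← h1]
    have h2 : (RCLike.ofReal ∘ hA.eigenvalues : Fin m → ℝ) = hA.eigenvalues := by
      funext i; simp
    rw [h2]
    simp only [dotProduct, mulVec_diagonal, pow_two]
    exact Finset.sum_congr rfl fun i _ => by ring

lemma rayleigh_lower {m : ℕ} (A : Matrix (Fin m) (Fin m) ℝ) (hA : A.IsHermitian) (v : Fin m → ℝ) :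
    (⨅ i, hA.eigenvalues i) * (∑ i, v i ^ 2) ≤ v ⬝ᵥ A *ᵥ v := by
  obtain ⟨u, hu, he⟩ := quadform_eigen A hA v
  rw [he, ← hu, Finset.mul_sum]
  refine Finset.sum_le_sum fun i _ => ?_
  exact mul_le_mul_of_nonneg_right (ciInf_le (Finite.bddBelow_range _) i) (sq_nonneg _)

lemma rayleigh_upper {m : ℕ} (A : Matrix (Fin m) (Fin m) ℝ) (hA : A.IsHermitian) (v : Fin m → ℝ) :
    v ⬝ᵥ A *ᵥ v ≤ (⨆ i, hA.eigenvalues i) * (∑ i, v i ^ 2) := by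
  obtain ⟨u, hu, he⟩ := quadform_eigen A hA v
  rw [he, ← hu, Finset.mul_sum]
  refine Finset.sum_le_sum fun i _ => ?_
  exact mul_le_mul_of_nonneg_right (le_ciSup (Finite.bddAbove_range _) i) (sq_nonneg _)

lemma lrelu_sub_neg (α z : ℝ) : lrelu α z - lrelu α (-z) = (1 + α) * z := by
  unfold lrelu
  rcases lt_trichotomy z 0 with h | h | h
  · rw [if_neg (by linarith), if_pos (by linarith)]; ring
  · simp [h]
  · rw [if_pos (by linarith), if_neg (by linarith)]; ring

lemma lrelu_lipschitz {α : ℝ} (h0 : 0 ≤ α) (h1 : α ≤ 1) (a b : ℝ) :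
    |lrelu α a - lrelu α b| ≤ |a - b| := by
  unfold lrelu
  have k1 := le_abs_self (a - b)
  have k2 := neg_abs_le (a - b)
  rw [abs_le]
  split_ifs with ha hb hb <;> constructor <;> nlinarith

lemma lrelu_continuous {α : ℝ} (h1 : α ≤ 1) : Continuous (lrelu α) := by
  have : lrelu α = fun z => max z (α * z) := by
    funext z
    unfold lrelu
    rcases le_or_gt 0 z with h | h
    · rw [if_pos h, max_eq_left]; nlinarith
    · rw [if_neg (not_le.2 h), max_eq_right]; nlinarith
  rw [this]
  exact continuous_id.max (continuous_const.mul continuous_id)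

lemma patch_mulVec_sq_le {r n : ℕ} (Q : Matrix (Fin r) (Fin n) ℝ)
    (h01 : ∀ a b, Q a b = 0 ∨ Q a b = 1) (hrow : ∀ a, ∃! b, Q a b = 1)
    (hcol : ∀ b a a', Q a b = 1 → Q a' b = 1 → a = a') (x : Fin n → ℝ) :
    ∑ a, (Q *ᵥ x) a ^ 2 ≤ ∑ b, x b ^ 2 := by
  classical
  have hc : ∀ a, ∃ b, Q a b = 1 ∧ ∀ c, Q a c = 1 → c = b := by
    intro a; obtain ⟨b, hb, hu⟩ := hrow a; exact ⟨b, hb, hu⟩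
  choose col hcol1 hcolu using hc
  have happ : ∀ a, (Q *ᵥ x) a = x (col a) := by
    intro a
    rw [mulVec, dotProduct]
    rw [Finset.sum_eq_single (col a)]
    · rw [hcol1 a, one_mul]
    · intro c _ hc'
      rcases h01 a c with h | h
      · rw [h, zero_mul]
      · exact absurd (hcolu a c h) hc'
    · intro h; exact absurd (Finset.mem_univ _) h
  have hinj : Function.Injective col := by
    intro a a' h
    exact hcol (col a) a a' (hcol1 a) (h ▸ hcol1 a')
  calc ∑ a, (Q *ᵥ x) a ^ 2 = ∑ a, x (col a) ^ 2 := by simp [happ]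
    _ = ∑ c ∈ Finset.univ.image col, x c ^ 2 :=
        (Finset.sum_image (f := fun c => x c ^ 2) (fun a _ a' _ h => hinj h)).symm
    _ ≤ ∑ b, x b ^ 2 :=
        Finset.sum_le_sum_of_subset_of_nonneg (Finset.subset_univ _)
          (fun b _ _ => sq_nonneg _)

lemma euc_norm_sq {m : ℕ} (y : EuclideanSpace ℝ (Fin m)) : ‖y‖ ^ 2 = ∑ i, y i ^ 2 := by
  rw [EuclideanSpace.norm_eq, Real.sq_sqrt (by positivity)]
  simp [sq_abs]

lemma euc_inner_eq {m : ℕ} (a b : EuclideanSpace ℝ (Fin m)) :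
    ⟪a, b⟫ = ∑ i, a i * b i := by
  simp [PiLp.inner_apply, RCLike.inner_apply, starRingEnd_apply]
  exact Finset.sum_congr rfl fun _ _ => mul_comm _ _

lemma coord_abs_le {m : ℕ} (y : EuclideanSpace ℝ (Fin m)) (i : Fin m) : |y i| ≤ ‖y‖ := by
  refine aux_le_of_sq_le_sq (norm_nonneg _) ?_ (abs_nonneg _)
  rw [euc_norm_sq, sq_abs]
  exact Finset.single_le_sum (f := fun j => y j ^ 2) (fun j _ => sq_nonneg _) (Finset.mem_univ i)

lemma sum_mulVec' {r n k : ℕ} (P : Fin k → Matrix (Fin r) (Fin n) ℝ) (x : Fin n → ℝ) :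
    (∑ i, P i) *ᵥ x = ∑ i, P i *ᵥ x := by
  ext a
  simp only [mulVec, dotProduct, Finset.sum_apply, Matrix.sum_apply, Finset.sum_mul]
  exact Finset.sum_comm

set_option maxHeartbeats 1000000

/-- One-step progress of the realizable Convotron update: for
`w' = w + η·(f_{w*}(x) − f_w(x))·∑ᵢPᵢx`,
`E[‖w' − w*‖²] ≤ (1 − η·((1+α)/k)·λ_min(P_Σ) + η²·λ_max(P)·E[‖x‖⁴])·‖w − w*‖²`. -/
theorem stmt8 {n r k : ℕ} (hk : 0 < k) (P : Fin k → Matrix (Fin r) (Fin n) ℝ)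
    (hP : IsPatchStruct P) (α : ℝ) (hα : α ∈ Set.Icc (0 : ℝ) 1)
    (μ : Measure (EuclideanSpace ℝ (Fin n))) [IsProbabilityMeasure μ]
    (hsymm : μ.map (fun x => -x) = μ)
    (hmom : Integrable (fun x => ‖x‖ ^ 4) μ)
    (hPSig : (∑ i, ∑ j, P i * covMat μ * (P j)ᵀ).IsHermitian)
    (hPmat : (∑ i, ∑ j, P i * (P j)ᵀ).IsHermitian)
    (w wstar : EuclideanSpace ℝ (Fin r)) (η : ℝ) (hη : 0 < η) :
    ∫ x, ‖(w + η • ((convnet α P wstar x - convnet α P w x) • toEuc ((∑ i, P i).mulVec x)))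
        - wstar‖ ^ 2 ∂μ
      ≤ (1 - η * ((1 + α) / k) * lamMin (∑ i, ∑ j, P i * covMat μ * (P j)ᵀ) hPSig
            + η ^ 2 * lamMax (∑ i, ∑ j, P i * (P j)ᵀ) hPmat * ∫ x, ‖x‖ ^ 4 ∂μ)
          * ‖w - wstar‖ ^ 2 := by
  obtain ⟨h01, hrow, hcolinj⟩ := hP
  obtain ⟨hα0, hα1⟩ := hα
  have hkR : (0:ℝ) < k := Nat.cast_pos.mpr hk
  set M : Matrix (Fin r) (Fin n) ℝ := ∑ i, P i with hM
  set v : EuclideanSpace ℝ (Fin r) := w - wstar with hv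
  set g : EuclideanSpace ℝ (Fin n) → ℝ :=
    fun x => convnet α P wstar x - convnet α P w x with hg
  set s : EuclideanSpace ℝ (Fin n) → EuclideanSpace ℝ (Fin r) :=
    fun x => toEuc (M *ᵥ x) with hs
  -- continuity
  have hcoord : ∀ i : Fin n, Continuous fun x : EuclideanSpace ℝ (Fin n) => x i :=
    fun i => (EuclideanSpace.proj i).continuous
  have hdotc : ∀ (u : Fin r → ℝ) (Qm : Matrix (Fin r) (Fin n) ℝ),
      Continuous fun x : EuclideanSpace ℝ (Fin n) => u ⬝ᵥ Qm *ᵥ x := by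
    intro u Qm
    simp only [dotProduct, mulVec]
    exact continuous_finset_sum _ fun a _ => continuous_const.mul
      (continuous_finset_sum _ fun b _ => continuous_const.mul (hcoord b))
  have hg_cont : Continuous g := by
    rw [hg]
    unfold convnet
    exact (continuous_const.mul (continuous_finset_sum _ fun i _ =>
        (lrelu_continuous hα1).comp (hdotc _ _))).sub
      (continuous_const.mul (continuous_finset_sum _ fun i _ =>
        (lrelu_continuous hα1).comp (hdotc _ _)))
  have hsc : ∀ a : Fin r, Continuous fun x : EuclideanSpace ℝ (Fin n) => s x a := by
    intro a
    have : (fun x : EuclideanSpace ℝ (Fin n) => s x a)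
        = fun x => ∑ b, M a b * x b := by
      funext x; rfl
    rw [this]
    exact continuous_finset_sum _ fun b _ => continuous_const.mul (hcoord b)
  have hs_cont : Continuous s := (PiLp.continuous_toLp 2 _).comp (continuous_pi hsc)
  -- master integrability
  have master : ∀ (f : EuclideanSpace ℝ (Fin n) → ℝ) (C : ℝ), Continuous f →
      (∀ x, |f x| ≤ C * (1 + ‖x‖ ^ 4)) → Integrable f μ := by
    intro f C hfc hbd
    refine Integrable.mono' (((integrable_const (1:ℝ)).add hmom).const_mul C)
      hfc.aestronglyMeasurable (Filter.Eventually.of_forall fun x => ?_)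
    simpa using hbd x
  -- pointwise bounds
  have hPx_norm : ∀ (i : Fin k) (x : EuclideanSpace ℝ (Fin n)), ‖toEuc ((P i) *ᵥ x)‖ ≤ ‖x‖ := by
    intro i x
    refine aux_le_of_sq_le_sq (norm_nonneg _) ?_ (norm_nonneg _)
    rw [euc_norm_sq, euc_norm_sq]
    exact patch_mulVec_sq_le (P i) (h01 i) (hrow i) (hcolinj i) x
  have hdot_bd : ∀ (u : EuclideanSpace ℝ (Fin r)) (i : Fin k) (x : EuclideanSpace ℝ (Fin n)),
      |(u : Fin r → ℝ) ⬝ᵥ (P i) *ᵥ x| ≤ ‖u‖ * ‖x‖ := by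
    intro u i x
    have h1 : (u : Fin r → ℝ) ⬝ᵥ (P i) *ᵥ x = ⟪u, toEuc ((P i) *ᵥ x)⟫ := by
      rw [euc_inner_eq]; rfl
    rw [h1]
    exact le_trans (abs_real_inner_le_norm _ _)
      (mul_le_mul_of_nonneg_left (hPx_norm i x) (norm_nonneg _))
  have hgsub : ∀ x : EuclideanSpace ℝ (Fin n),
      g x = (1 / (k:ℝ)) * ∑ i, (lrelu α ((wstar : Fin r → ℝ) ⬝ᵥ (P i) *ᵥ x)
        - lrelu α ((w : Fin r → ℝ) ⬝ᵥ (P i) *ᵥ x)) := by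
    intro x
    rw [hg]
    unfold convnet
    rw [Finset.sum_sub_distrib, mul_sub]
  have hvdot : ∀ (i : Fin k) (x : EuclideanSpace ℝ (Fin n)),
      (wstar : Fin r → ℝ) ⬝ᵥ (P i) *ᵥ x - (w : Fin r → ℝ) ⬝ᵥ (P i) *ᵥ x
        = -((v : Fin r → ℝ) ⬝ᵥ (P i) *ᵥ x) := by
    intro i x
    rw [hv]
    simp only [dotProduct, PiLp.sub_apply]
    rw [← Finset.sum_sub_distrib, ← Finset.sum_neg_distrib]
    exact Finset.sum_congr rfl fun a _ => by ring
  have hg_bd : ∀ x, |g x| ≤ ‖v‖ * ‖x‖ := by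
    intro x
    rw [hgsub x, abs_mul, abs_of_pos (by positivity : (0:ℝ) < 1 / (k:ℝ))]
    calc (1 / (k:ℝ)) * |∑ i, (lrelu α ((wstar : Fin r → ℝ) ⬝ᵥ (P i) *ᵥ x)
          - lrelu α ((w : Fin r → ℝ) ⬝ᵥ (P i) *ᵥ x))|
        ≤ (1 / (k:ℝ)) * ∑ i : Fin k, (‖v‖ * ‖x‖) := by
          refine mul_le_mul_of_nonneg_left ?_ (by positivity)
          refine le_trans (Finset.abs_sum_le_sum_abs _ _) (Finset.sum_le_sum fun i _ => ?_)
          refine le_trans (lrelu_lipschitz hα0 hα1 _ _) ?_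
          rw [hvdot i x, abs_neg]
          exact hdot_bd v i x
      _ = ‖v‖ * ‖x‖ := by
          rw [Finset.sum_const, Finset.card_univ, Fintype.card_fin, nsmul_eq_mul]
          field_simp
  have hs_bd : ∀ x, ‖s x‖ ≤ k * ‖x‖ := by
    intro x
    rw [hs]
    show ‖toEuc (M *ᵥ x)‖ ≤ _
    rw [hM, sum_mulVec']
    have he : toEuc (∑ i, P i *ᵥ (x : Fin n → ℝ)) = ∑ i, toEuc (P i *ᵥ x) := by simp [toEuc, WithLp.toLp_sum]
    rw [he]
    refine le_trans (norm_sum_le _ _) ?_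
    calc ∑ i : Fin k, ‖toEuc (P i *ᵥ (x : Fin n → ℝ))‖ ≤ ∑ i : Fin k, ‖x‖ :=
          Finset.sum_le_sum fun i _ => hPx_norm i x
      _ = k * ‖x‖ := by
          rw [Finset.sum_const, Finset.card_univ, Fintype.card_fin, nsmul_eq_mul]
  have hsq_le : ∀ t : ℝ, t ^ 2 ≤ 1 + t ^ 4 := fun t => by nlinarith [sq_nonneg (t^2 - 1), sq_nonneg t]
  -- integrability
  have hinr_bd : ∀ x, |⟪v, s x⟫| ≤ ‖v‖ * (k * ‖x‖) := fun x =>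
    le_trans (abs_real_inner_le_norm v (s x))
      (mul_le_mul_of_nonneg_left (hs_bd x) (norm_nonneg _))
  have hTc : Continuous fun x => g x * ⟪v, s x⟫ :=
    hg_cont.mul (continuous_const.inner hs_cont)
  have hTbd : ∀ x : EuclideanSpace ℝ (Fin n),
      |g x * ⟪v, s x⟫| ≤ (k * (‖v‖ * ‖v‖)) * (1 + ‖x‖ ^ 4) := by
    intro x
    rw [abs_mul]
    calc |g x| * |⟪v, s x⟫| ≤ (‖v‖ * ‖x‖) * (‖v‖ * (k * ‖x‖)) := by
          exact mul_le_mul (hg_bd x) (hinr_bd x) (abs_nonneg _) (by positivity)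
      _ = (k * (‖v‖ * ‖v‖)) * (‖x‖ ^ 2) := by ring
      _ ≤ (k * (‖v‖ * ‖v‖)) * (1 + ‖x‖ ^ 4) := by
          refine mul_le_mul_of_nonneg_left (hsq_le _) (by positivity)
  have hTint : Integrable (fun x => g x * ⟪v, s x⟫) μ := master _ _ hTc hTbd
  have hBint : Integrable (fun x => (g x) ^ 2 * ‖s x‖ ^ 2) μ := by
    refine master _ ((k^2 * (‖v‖*‖v‖))) ((hg_cont.pow 2).mul (hs_cont.norm.pow 2)) fun x => ?_
    rw [abs_of_nonneg (by positivity)]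
    have h1 : (g x) ^ 2 ≤ ‖v‖ ^ 2 * ‖x‖ ^ 2 := by
      have := hg_bd x; nlinarith [abs_nonneg (g x), sq_abs (g x), norm_nonneg v, norm_nonneg x]
    have h2 : ‖s x‖ ^ 2 ≤ (k * ‖x‖) ^ 2 := by
      have := hs_bd x; nlinarith [norm_nonneg (s x)]
    calc (g x) ^ 2 * ‖s x‖ ^ 2 ≤ (‖v‖ ^ 2 * ‖x‖ ^ 2) * ((k * ‖x‖) ^ 2) :=
          mul_le_mul h1 h2 (sq_nonneg _) (by positivity)
      _ = (k^2 * (‖v‖*‖v‖)) * (‖x‖^2)^2 := by ring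
      _ ≤ (k^2 * (‖v‖*‖v‖)) * (1 + ‖x‖ ^ 4) := by
          refine mul_le_mul_of_nonneg_left ?_ (by positivity)
          nlinarith [sq_nonneg (‖x‖^2 - 1)]
  have hQint : Integrable (fun x => ⟪v, s x⟫ ^ 2) μ := by
    refine master _ ((k^2 * (‖v‖*‖v‖))) ((continuous_const.inner hs_cont).pow 2) fun x => ?_
    rw [abs_of_nonneg (sq_nonneg _)]
    have := hinr_bd x
    calc ⟪v, s x⟫ ^ 2 ≤ (‖v‖ * (k * ‖x‖)) ^ 2 := by
          nlinarith [abs_nonneg ⟪v, s x⟫, sq_abs ⟪v, s x⟫]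
      _ = (k^2 * (‖v‖*‖v‖)) * ‖x‖^2 := by ring
      _ ≤ (k^2 * (‖v‖*‖v‖)) * (1 + ‖x‖ ^ 4) :=
          mul_le_mul_of_nonneg_left (hsq_le _) (by positivity)
  -- pointwise expansion
  have hpoint : ∀ x, ‖(w + η • (g x • s x)) - wstar‖ ^ 2
      = ‖v‖ ^ 2 + (2 * η) * (g x * ⟪v, s x⟫) + η ^ 2 * ((g x) ^ 2 * ‖s x‖ ^ 2) := by
    intro x
    have e1 : w + η • (g x • s x) - wstar = v + (η * g x) • s x := by
      rw [smul_smul, hv, add_sub_right_comm]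
    rw [e1, norm_add_sq_real, real_inner_smul_right, norm_smul]
    rw [mul_pow, Real.norm_eq_abs, sq_abs]
    ring
  have hsplit : ∫ x, ‖(w + η • (g x • s x)) - wstar‖ ^ 2 ∂μ
      = ‖v‖ ^ 2 + (2 * η) * (∫ x, g x * ⟪v, s x⟫ ∂μ)
        + η ^ 2 * (∫ x, (g x) ^ 2 * ‖s x‖ ^ 2 ∂μ) := by
    rw [integral_congr_ae (Filter.Eventually.of_forall hpoint)]
    have i1 : Integrable (fun x => ‖v‖ ^ 2 + (2 * η) * (g x * ⟪v, s x⟫)) μ :=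
      (integrable_const _).add (hTint.const_mul _)
    have i2 : Integrable (fun x => η ^ 2 * ((g x) ^ 2 * ‖s x‖ ^ 2)) μ := hBint.const_mul _
    rw [integral_add i1 i2, integral_add (integrable_const (‖v‖ ^ 2)) (hTint.const_mul _),
      integral_const, integral_const_mul, integral_const_mul]
    simp [measure_univ]
  -- symmetrization
  have hTpair : ∀ x, (g x * ⟪v, s x⟫) + (g (-x) * ⟪v, s (-x)⟫)
      = -((1 + α) / k) * ⟪v, s x⟫ ^ 2 := by
    have hmn : ∀ (x : EuclideanSpace ℝ (Fin n)) (i : Fin k),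
        (P i) *ᵥ ((-x : EuclideanSpace ℝ (Fin n)) : Fin n → ℝ) = -((P i) *ᵥ x) := by
      intro x i
      funext a
      show ∑ b, P i a b * ((-x : EuclideanSpace ℝ (Fin n)) b) = -(∑ b, P i a b * x b)
      rw [← Finset.sum_neg_distrib]
      refine Finset.sum_congr rfl fun b _ => ?_
      have : (-x : EuclideanSpace ℝ (Fin n)) b = -(x b) := rfl
      rw [this]; ring
    have hsneg : ∀ x : EuclideanSpace ℝ (Fin n), s (-x) = -(s x) := by
      intro x
      rw [hs]
      show toEuc ((∑ i, P i) *ᵥ _) = -(toEuc ((∑ i, P i) *ᵥ _))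
      ext a
      show ((∑ i, P i) *ᵥ ((-x : EuclideanSpace ℝ (Fin n)) : Fin n → ℝ)) a = _
      have h1 : ((∑ i, P i) : Matrix (Fin r) (Fin n) ℝ) *ᵥ ((-x : EuclideanSpace ℝ (Fin n)) : Fin n → ℝ)
          = -((∑ i, P i) *ᵥ x) := by
        rw [sum_mulVec', sum_mulVec']
        rw [← Finset.sum_neg_distrib]
        exact Finset.sum_congr rfl fun i _ => hmn x i
      rw [h1]
      rfl
    have hdotM : ∀ (u : Fin r → ℝ) (x : EuclideanSpace ℝ (Fin n)),
        ∑ i : Fin k, u ⬝ᵥ (P i) *ᵥ x = u ⬝ᵥ (M *ᵥ x) := by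
      intro u x
      rw [hM, sum_mulVec']
      simp only [dotProduct, Finset.sum_apply, Finset.mul_sum]
      exact Finset.sum_comm
    have hvs : ∀ x : EuclideanSpace ℝ (Fin n),
        ⟪v, s x⟫ = (w : Fin r → ℝ) ⬝ᵥ (M *ᵥ x) - (wstar : Fin r → ℝ) ⬝ᵥ (M *ᵥ x) := by
      intro x
      rw [euc_inner_eq]
      simp only [dotProduct]
      rw [← Finset.sum_sub_distrib]
      refine Finset.sum_congr rfl fun a _ => ?_
      have h1 : v a = w a - wstar a := rfl
      have h2 : s x a = (M *ᵥ x) a := rfl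
      rw [h1, h2]; ring
    have hgneg : ∀ x : EuclideanSpace ℝ (Fin n),
        g x - g (-x) = -((1 + α) / k) * ⟪v, s x⟫ := by
      intro x
      rw [hgsub x, hgsub (-x), ← mul_sub, ← Finset.sum_sub_distrib]
      have e : ∀ i : Fin k,
          (lrelu α ((wstar : Fin r → ℝ) ⬝ᵥ (P i) *ᵥ x) - lrelu α ((w : Fin r → ℝ) ⬝ᵥ (P i) *ᵥ x))
            - (lrelu α ((wstar : Fin r → ℝ) ⬝ᵥ (P i) *ᵥ (-x : EuclideanSpace ℝ (Fin n)))
              - lrelu α ((w : Fin r → ℝ) ⬝ᵥ (P i) *ᵥ (-x : EuclideanSpace ℝ (Fin n))))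
          = (1 + α) * ((wstar : Fin r → ℝ) ⬝ᵥ (P i) *ᵥ x)
            - (1 + α) * ((w : Fin r → ℝ) ⬝ᵥ (P i) *ᵥ x) := by
        intro i
        rw [hmn x i, dotProduct_neg, dotProduct_neg]
        have h1 := lrelu_sub_neg α ((wstar : Fin r → ℝ) ⬝ᵥ (P i) *ᵥ x)
        have h2 := lrelu_sub_neg α ((w : Fin r → ℝ) ⬝ᵥ (P i) *ᵥ x)
        linarith
      rw [Finset.sum_congr rfl fun i _ => e i]
      rw [Finset.sum_sub_distrib, ← Finset.mul_sum, ← Finset.mul_sum]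
      rw [hdotM, hdotM, hvs x]
      field_simp
      ring
    intro x
    rw [hsneg x, inner_neg_right]
    linear_combination ⟪v, s x⟫ * hgneg x
  have hTval : ∫ x, g x * ⟪v, s x⟫ ∂μ = -((1 + α) / (2 * k)) * ∫ x, ⟪v, s x⟫ ^ 2 ∂μ := by
    have hTnegint : Integrable (fun x => g (-x) * ⟪v, s (-x)⟫) μ := by
      refine master _ (k * (‖v‖ * ‖v‖)) (hTc.comp continuous_neg) fun x => ?_
      have := hTbd (-x)
      simpa [norm_neg] using this
    have hTmap : ∫ x, g x * ⟪v, s x⟫ ∂μ = ∫ x, g (-x) * ⟪v, s (-x)⟫ ∂μ := by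
      have hm : AEStronglyMeasurable (fun x => g x * ⟪v, s x⟫)
          (μ.map (fun x : EuclideanSpace ℝ (Fin n) => -x)) := by
        rw [hsymm]; exact hTc.aestronglyMeasurable
      nth_rewrite 1 [← hsymm]
      exact integral_map measurable_neg.aemeasurable hm
    have h2T : (2:ℝ) * ∫ x, g x * ⟪v, s x⟫ ∂μ = -((1 + α) / k) * ∫ x, ⟪v, s x⟫ ^ 2 ∂μ := by
      rw [two_mul]
      nth_rewrite 2 [hTmap]
      rw [← integral_add hTint hTnegint]
      rw [integral_congr_ae (Filter.Eventually.of_forall hTpair)]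
      rw [integral_const_mul]
    have e : -((1 + α) / (2 * (k:ℝ))) * ∫ x, ⟪v, s x⟫ ^ 2 ∂μ
        = (-((1 + α) / (k:ℝ)) * ∫ x, ⟪v, s x⟫ ^ 2 ∂μ) / 2 := by ring
    rw [e]
    linarith [h2T]
  -- covariance identity
  have hQval : ∫ x, ⟪v, s x⟫ ^ 2 ∂μ
      = (v : Fin r → ℝ) ⬝ᵥ ((∑ i, ∑ j, P i * covMat μ * (P j)ᵀ) *ᵥ v) := by
    have hASeq : (∑ i, ∑ j, P i * covMat μ * (P j)ᵀ) = M * covMat μ * Mᵀ := by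
      rw [hM, Matrix.transpose_sum, Matrix.mul_sum]
      conv_lhs => rw [Finset.sum_comm]
      exact Finset.sum_congr rfl fun j _ => by rw [Matrix.sum_mul, Matrix.sum_mul]
    have hxcd_int : ∀ c d : Fin n, Integrable (fun x : EuclideanSpace ℝ (Fin n) => x c * x d) μ := by
      intro c d
      refine master _ 1 ((hcoord c).mul (hcoord d)) fun x => ?_
      rw [one_mul, abs_mul]
      calc |x c| * |x d| ≤ ‖x‖ * ‖x‖ :=
            mul_le_mul (coord_abs_le x c) (coord_abs_le x d) (abs_nonneg _) (norm_nonneg _)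
        _ = ‖x‖ ^ 2 := (pow_two _).symm
        _ ≤ 1 + ‖x‖ ^ 4 := hsq_le _
    have hy_int : ∀ a b : Fin r,
        Integrable (fun x : EuclideanSpace ℝ (Fin n) => (M *ᵥ x) a * (M *ᵥ x) b) μ := by
      intro a b
      refine master _ ((k:ℝ)^2) ((hsc a).mul (hsc b)) fun x => ?_
      have ha : |(M *ᵥ (x : Fin n → ℝ)) a| ≤ ‖s x‖ := coord_abs_le (s x) a
      have hb : |(M *ᵥ (x : Fin n → ℝ)) b| ≤ ‖s x‖ := coord_abs_le (s x) b
      have hsb := hs_bd x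
      rw [abs_mul]
      calc |(M *ᵥ (x : Fin n → ℝ)) a| * |(M *ᵥ (x : Fin n → ℝ)) b|
          ≤ ((k:ℝ) * ‖x‖) * ((k:ℝ) * ‖x‖) :=
            mul_le_mul (le_trans ha hsb) (le_trans hb hsb) (abs_nonneg _) (by positivity)
        _ = (k:ℝ)^2 * ‖x‖ ^ 2 := by ring
        _ ≤ (k:ℝ)^2 * (1 + ‖x‖ ^ 4) := mul_le_mul_of_nonneg_left (hsq_le _) (by positivity)
    have hyab : ∀ a b : Fin r,
        ∫ x, (M *ᵥ (x : Fin n → ℝ)) a * (M *ᵥ (x : Fin n → ℝ)) b ∂μ = (M * covMat μ * Mᵀ) a b := by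
      intro a b
      have hpt : ∀ x : EuclideanSpace ℝ (Fin n), (M *ᵥ (x : Fin n → ℝ)) a * (M *ᵥ (x : Fin n → ℝ)) b
          = ∑ c, ∑ d, (M a c * M b d) * (x c * x d) := by
        intro x
        show (∑ c, M a c * x c) * (∑ d, M b d * x d) = _
        rw [Finset.sum_mul_sum]
        exact Finset.sum_congr rfl fun c _ => Finset.sum_congr rfl fun d _ => by ring
      rw [integral_congr_ae (Filter.Eventually.of_forall hpt)]
      rw [integral_finset_sum _
        (fun c _ => integrable_finset_sum _ (fun d _ => (hxcd_int c d).const_mul _))]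
      have h1 : ∀ c ∈ Finset.univ, ∫ x, ∑ d, (M a c * M b d) * (x c * x d) ∂μ
          = ∑ d, (M a c * M b d) * covMat μ c d := by
        intro c _
        rw [integral_finset_sum _ (fun d _ => (hxcd_int c d).const_mul _)]
        exact Finset.sum_congr rfl fun d _ => integral_const_mul _ _
      rw [Finset.sum_congr rfl h1, Finset.sum_comm]
      simp only [Matrix.mul_apply, Matrix.transpose_apply, Finset.sum_mul]
      exact Finset.sum_congr rfl fun d _ => Finset.sum_congr rfl fun c _ => by ring
    have hQpt : ∀ x : EuclideanSpace ℝ (Fin n),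
        ⟪v, s x⟫ ^ 2 = ∑ a, ∑ b, (v a * v b) * ((M *ᵥ (x : Fin n → ℝ)) a * (M *ᵥ (x : Fin n → ℝ)) b) := by
      intro x
      rw [euc_inner_eq, pow_two, Finset.sum_mul_sum]
      refine Finset.sum_congr rfl fun a _ => Finset.sum_congr rfl fun b _ => ?_
      have h2a : s x a = (M *ᵥ (x : Fin n → ℝ)) a := rfl
      have h2b : s x b = (M *ᵥ (x : Fin n → ℝ)) b := rfl
      rw [h2a, h2b]; ring
    rw [integral_congr_ae (Filter.Eventually.of_forall hQpt)]
    rw [integral_finset_sum _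
      (fun a _ => integrable_finset_sum _ (fun b _ => (hy_int a b).const_mul _))]
    have h1 : ∀ a ∈ Finset.univ,
        (∫ x, ∑ b, (v a * v b) * ((M *ᵥ (x : Fin n → ℝ)) a * (M *ᵥ (x : Fin n → ℝ)) b) ∂μ)
        = ∑ b, (v a * v b) * (M * covMat μ * Mᵀ) a b := by
      intro a _
      rw [integral_finset_sum _ (fun b _ => (hy_int a b).const_mul _)]
      exact Finset.sum_congr rfl fun b _ => by rw [integral_const_mul, hyab a b]
    rw [Finset.sum_congr rfl h1, hASeq]
    simp only [dotProduct, mulVec, Finset.mul_sum]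
    exact Finset.sum_congr rfl fun a _ => Finset.sum_congr rfl fun b _ => by ring
  have hQlow : lamMin (∑ i, ∑ j, P i * covMat μ * (P j)ᵀ) hPSig * ‖v‖ ^ 2
      ≤ ∫ x, ⟪v, s x⟫ ^ 2 ∂μ := by
    rw [hQval, euc_norm_sq]
    exact rayleigh_lower _ hPSig v
  -- lamMax bound
  have hPmeq : (∑ i, ∑ j, P i * (P j)ᵀ) = M * Mᵀ := by
    rw [hM, Matrix.transpose_sum, Matrix.mul_sum]
    conv_lhs => rw [Finset.sum_comm]
    exact Finset.sum_congr rfl fun j _ => by rw [Matrix.sum_mul]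
  have hpsd : (M * Mᵀ).PosSemidef := by
    have h := Matrix.posSemidef_self_mul_conjTranspose M
    have hH : Mᴴ = Mᵀ := by ext i j; simp [Matrix.conjTranspose_apply]
    rwa [hH] at h
  have hlamax0 : 0 ≤ lamMax (∑ i, ∑ j, P i * (P j)ᵀ) hPmat := by
    have hpsd' : (∑ i, ∑ j, P i * (P j)ᵀ).PosSemidef := hPmeq ▸ hpsd
    unfold lamMax
    rcases isEmpty_or_nonempty (Fin r) with hre | hre
    · rw [Real.iSup_of_isEmpty]
    · obtain ⟨i⟩ := hre
      exact le_trans (hpsd'.eigenvalues_nonneg i) (le_ciSup (Finite.bddAbove_range _) i)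
  have hs_sq : ∀ x, ‖s x‖ ^ 2 ≤ lamMax (∑ i, ∑ j, P i * (P j)ᵀ) hPmat * ‖x‖ ^ 2 := by
    intro x
    have hq0 : (0:ℝ) ≤ ‖s x‖ ^ 2 := sq_nonneg _
    have hqe : ‖s x‖ ^ 2 = (M *ᵥ (x : Fin n → ℝ)) ⬝ᵥ (M *ᵥ (x : Fin n → ℝ)) := by
      rw [hs]
      show ‖toEuc (M *ᵥ (x : Fin n → ℝ))‖ ^ 2 = _
      rw [euc_norm_sq]
      simp [toEuc, dotProduct, pow_two]
    set y : Fin r → ℝ := M *ᵥ (x : Fin n → ℝ) with hy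
    have hxy : y ⬝ᵥ y = (x : Fin n → ℝ) ⬝ᵥ (Mᵀ *ᵥ y) := by
      conv_rhs => rw [dotProduct_mulVec, vecMul_transpose, ← hy]
    have hcs : (y ⬝ᵥ y) ^ 2 ≤ (∑ c, x c ^ 2) * ((Mᵀ *ᵥ y) ⬝ᵥ (Mᵀ *ᵥ y)) := by
      rw [hxy]
      have h := Finset.sum_mul_sq_le_sq_mul_sq Finset.univ (fun c => (x : Fin n → ℝ) c)
        (fun c => (Mᵀ *ᵥ y) c)
      simpa [dotProduct, pow_two] using h
    have hzz : (Mᵀ *ᵥ y) ⬝ᵥ (Mᵀ *ᵥ y) = y ⬝ᵥ ((∑ i, ∑ j, P i * (P j)ᵀ) *ᵥ y) := by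
      rw [hPmeq]
      nth_rewrite 1 [mulVec_transpose]
      rw [← dotProduct_mulVec, mulVec_mulVec]
    have hray : y ⬝ᵥ ((∑ i, ∑ j, P i * (P j)ᵀ) *ᵥ y)
        ≤ lamMax (∑ i, ∑ j, P i * (P j)ᵀ) hPmat * (∑ a, y a ^ 2) :=
      rayleigh_upper _ hPmat y
    have hsum : (∑ a, y a ^ 2) = ‖s x‖ ^ 2 := by
      rw [hqe]; simp [dotProduct, pow_two]
    have hxn : (∑ c, x c ^ 2) = ‖x‖ ^ 2 := (euc_norm_sq x).symm
    rcases eq_or_lt_of_le hq0 with h0 | hpos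
    · rw [← h0]
      exact mul_nonneg hlamax0 (sq_nonneg _)
    · have key : (‖s x‖ ^ 2) ^ 2 ≤ (lamMax (∑ i, ∑ j, P i * (P j)ᵀ) hPmat * ‖x‖ ^ 2) * ‖s x‖ ^ 2 := by
        calc (‖s x‖ ^ 2) ^ 2 = (y ⬝ᵥ y) ^ 2 := by rw [hqe]
          _ ≤ (∑ c, x c ^ 2) * ((Mᵀ *ᵥ y) ⬝ᵥ (Mᵀ *ᵥ y)) := hcs
          _ = (∑ c, x c ^ 2) * (y ⬝ᵥ ((∑ i, ∑ j, P i * (P j)ᵀ) *ᵥ y)) := by rw [hzz]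
          _ ≤ (∑ c, x c ^ 2) * (lamMax (∑ i, ∑ j, P i * (P j)ᵀ) hPmat * (∑ a, y a ^ 2)) := by
              refine mul_le_mul_of_nonneg_left hray ?_
              exact Finset.sum_nonneg fun c _ => sq_nonneg _
          _ = (lamMax (∑ i, ∑ j, P i * (P j)ᵀ) hPmat * ‖x‖ ^ 2) * ‖s x‖ ^ 2 := by
              rw [hsum, hxn]; ring
      refine le_of_mul_le_mul_right ?_ hpos
      nlinarith [key]
  have hBval : ∫ x, (g x) ^ 2 * ‖s x‖ ^ 2 ∂μ
      ≤ lamMax (∑ i, ∑ j, P i * (P j)ᵀ) hPmat * (∫ x, ‖x‖ ^ 4 ∂μ) * ‖v‖ ^ 2 := by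
    have hbp : ∀ x : EuclideanSpace ℝ (Fin n), (g x) ^ 2 * ‖s x‖ ^ 2
        ≤ (lamMax (∑ i, ∑ j, P i * (P j)ᵀ) hPmat * ‖v‖ ^ 2) * ‖x‖ ^ 4 := by
      intro x
      have h1 : (g x) ^ 2 ≤ ‖v‖ ^ 2 * ‖x‖ ^ 2 := by
        nlinarith [hg_bd x, abs_nonneg (g x), sq_abs (g x), norm_nonneg v, norm_nonneg x]
      calc (g x) ^ 2 * ‖s x‖ ^ 2
          ≤ (‖v‖ ^ 2 * ‖x‖ ^ 2) * (lamMax (∑ i, ∑ j, P i * (P j)ᵀ) hPmat * ‖x‖ ^ 2) :=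
            mul_le_mul h1 (hs_sq x) (sq_nonneg _) (by positivity)
        _ = (lamMax (∑ i, ∑ j, P i * (P j)ᵀ) hPmat * ‖v‖ ^ 2) * ‖x‖ ^ 4 := by ring
    calc ∫ x, (g x) ^ 2 * ‖s x‖ ^ 2 ∂μ
        ≤ ∫ x, (lamMax (∑ i, ∑ j, P i * (P j)ᵀ) hPmat * ‖v‖ ^ 2) * ‖x‖ ^ 4 ∂μ :=
          integral_mono hBint (hmom.const_mul _) hbp
      _ = lamMax (∑ i, ∑ j, P i * (P j)ᵀ) hPmat * (∫ x, ‖x‖ ^ 4 ∂μ) * ‖v‖ ^ 2 := by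
          rw [integral_const_mul]; ring
  -- assembly
  have hmom0 : 0 ≤ ∫ x, ‖x‖ ^ 4 ∂μ := integral_nonneg fun x => by positivity
  rw [hsplit, hTval]
  have hc1 : 0 ≤ η * ((1 + α) / k) := by positivity
  have this1 := mul_le_mul_of_nonneg_left hQlow hc1
  have h3 : η ^ 2 * (∫ x, (g x) ^ 2 * ‖s x‖ ^ 2 ∂μ)
      ≤ η ^ 2 * (lamMax (∑ i, ∑ j, P i * (P j)ᵀ) hPmat * (∫ x, ‖x‖ ^ 4 ∂μ) * ‖v‖ ^ 2) :=
    mul_le_mul_of_nonneg_left hBval (by positivity)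
  have e1 : (2 * η) * (-((1 + α) / (2 * (k:ℝ))) * ∫ x, ⟪v, s x⟫ ^ 2 ∂μ)
      = -(η * ((1 + α) / k) * ∫ x, ⟪v, s x⟫ ^ 2 ∂μ) := by
    field_simp
  have e2 : (1 - η * ((1 + α) / k) * lamMin (∑ i, ∑ j, P i * covMat μ * (P j)ᵀ) hPSig
            + η ^ 2 * lamMax (∑ i, ∑ j, P i * (P j)ᵀ) hPmat * ∫ x, ‖x‖ ^ 4 ∂μ) * ‖v‖ ^ 2
      = ‖v‖ ^ 2
        - η * ((1 + α) / k) * (lamMin (∑ i, ∑ j, P i * covMat μ * (P j)ᵀ) hPSig * ‖v‖ ^ 2)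
        + η ^ 2 * (lamMax (∑ i, ∑ j, P i * (P j)ᵀ) hPmat * (∫ x, ‖x‖ ^ 4 ∂μ) * ‖v‖ ^ 2) := by
    ring
  rw [e1, e2]
  linarith [this1, h3]
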